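/- arXiv:2511.08707 — 3 statements merged into one kernel-verified Lean document; each statement's English description precedes it below -/
import Mathlib

section
/- For any matrix Z ∈ ℝ^{d×m}, any orthogonal projection P, and any α > 0, the coding rate R(Z) = (1/2) log det(I + α Z Z^T) satisfies R(P Z) ≤ R(Z). -/
open Matrix

/-- If `N` is positive semidefinite, then `det (1 + N) ≥ 1`. -/
lemma one_le_det_one_add_of_posSemidef {n : ℕ} {N : Matrix (Fin n) (Fin n) ℝ}
    (hN : N.PosSemidef) : (1 : ℝ) ≤ (1 + N).det := by
  have hU : (hN.1.eigenvectorUnitary : Matrix (Fin n) (Fin n) ℝ) *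
      star (hN.1.eigenvectorUnitary : Matrix (Fin n) (Fin n) ℝ) = 1 :=
    Matrix.mem_unitaryGroup_iff.mp hN.1.eigenvectorUnitary.2
  have h1 : (1 : Matrix (Fin n) (Fin n) ℝ) + N
      = (hN.1.eigenvectorUnitary : Matrix (Fin n) (Fin n) ℝ) *
        (1 + diagonal (RCLike.ofReal ∘ hN.1.eigenvalues)) *
        star (hN.1.eigenvectorUnitary : Matrix (Fin n) (Fin n) ℝ) := by
    rw [mul_add, mul_one, add_mul, hU]
    congr 1
    exact hN.1.spectral_theorem
  rw [h1, det_mul_right_comm, hU, one_mul]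
  have : (1 : Matrix (Fin n) (Fin n) ℝ) + diagonal (RCLike.ofReal ∘ hN.1.eigenvalues)
      = diagonal (fun i => 1 + hN.1.eigenvalues i) := by
    rw [← diagonal_one, diagonal_add]
    rfl
  rw [this, det_diagonal]
  have h2 := Finset.prod_le_prod (s := Finset.univ) (f := fun _ : Fin n => (1:ℝ))
    (g := fun i => 1 + hN.1.eigenvalues i) (fun i _ => zero_le_one)
    (fun i _ => by
      show (1:ℝ) ≤ 1 + hN.1.eigenvalues i
      linarith [hN.eigenvalues_nonneg i])
  simpa using h2

/-- Determinant monotonicity: adding a PSD matrix to a PD matrix doesn't decrease det. -/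
lemma det_le_det_add_posSemidef {n : ℕ} {M S : Matrix (Fin n) (Fin n) ℝ}
    (hM : M.PosDef) (hS : S.PosSemidef) : M.det ≤ (M + S).det := by
  open scoped MatrixOrder in
  obtain ⟨B, hB⟩ := CStarAlgebra.nonneg_iff_eq_star_mul_self.mp hS.nonneg
  rw [star_eq_conjTranspose, conjTranspose_eq_transpose_of_trivial] at hB
  have hdet : IsUnit M.det := (isUnit_iff_ne_zero).mpr hM.det_pos.ne'
  have hMS : M + S = M * (1 + M⁻¹ * S) := by
    rw [mul_add, mul_one, ← Matrix.mul_assoc, Matrix.mul_nonsing_inv _ hdet, one_mul]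
  have hpsd : (B * M⁻¹ * Bᵀ).PosSemidef := by
    have := (hM.inv).posSemidef.mul_mul_conjTranspose_same B
    rwa [conjTranspose_eq_transpose_of_trivial] at this
  calc M.det = M.det * 1 := (mul_one _).symm
    _ ≤ M.det * (1 + B * M⁻¹ * Bᵀ).det := by
        exact mul_le_mul_of_nonneg_left (one_le_det_one_add_of_posSemidef hpsd)
          hM.det_pos.le
    _ = (M + S).det := by
        rw [hMS, det_mul, hB, ← Matrix.mul_assoc M⁻¹ Bᵀ B,
          det_one_add_mul_comm (M⁻¹ * Bᵀ) B, ← Matrix.mul_assoc B]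


/-- `α • (Bᵀ * B)` is positive semidefinite for `0 ≤ α`. -/
lemma smul_transpose_mul_self_posSemidef {α : ℝ} (hα : 0 ≤ α) {d m : ℕ}
    (B : Matrix (Fin d) (Fin m) ℝ) : (α • (Bᵀ * B)).PosSemidef := by
  have h := Matrix.posSemidef_conjTranspose_mul_self (Real.sqrt α • B)
  have e : ((Real.sqrt α • B)ᴴ) * (Real.sqrt α • B) = α • (Bᵀ * B) := by
    rw [conjTranspose_eq_transpose_of_trivial, transpose_smul, Matrix.smul_mul, Matrix.mul_smul,
      smul_smul, Real.mul_self_sqrt hα]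
  exact e ▸ h

/-- For any `Z : ℝ^{d×m}`, orthogonal projection `P`, and `α > 0`, the coding rate
`R(Z) = (1/2) log det (I + α Z Zᵀ)` satisfies `R(P Z) ≤ R(Z)`. -/
theorem coding_rate_proj_le {d m : ℕ} (Z : Matrix (Fin d) (Fin m) ℝ)
    (P : Matrix (Fin d) (Fin d) ℝ) (hP2 : P * P = P) (hPT : Pᵀ = P)
    (α : ℝ) (hα : 0 < α) :
    (1/2) * Real.log (1 + α • ((P * Z) * (P * Z)ᵀ)).det ≤
      (1/2) * Real.log (1 + α • (Z * Zᵀ)).det := by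
  have h1P : (1 - P)ᵀ = 1 - P := by rw [transpose_sub, transpose_one, hPT]
  have h1P2 : (1 - P) * (1 - P) = 1 - P := by
    rw [Matrix.mul_sub, Matrix.mul_one, Matrix.sub_mul, Matrix.one_mul, hP2]
    abel
  have hWW : (P * Z)ᵀ * (P * Z) = Zᵀ * P * Z := by
    rw [transpose_mul, hPT, Matrix.mul_assoc Zᵀ P (P * Z), ← Matrix.mul_assoc P P Z, hP2,
      ← Matrix.mul_assoc]
  have hVV : ((1 - P) * Z)ᵀ * ((1 - P) * Z) = Zᵀ * Z - Zᵀ * P * Z := by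
    rw [transpose_mul, h1P, Matrix.mul_assoc Zᵀ (1 - P) ((1 - P) * Z),
      ← Matrix.mul_assoc (1 - P) (1 - P) Z, h1P2, ← Matrix.mul_assoc, Matrix.mul_sub Zᵀ 1 P, Matrix.mul_one,
      Matrix.sub_mul]
  have e1 : (1 + α • ((P * Z) * (P * Z)ᵀ)).det = (1 + α • (Zᵀ * P * Z)).det := by
    rw [← Matrix.smul_mul, det_one_add_mul_comm, Matrix.mul_smul, hWW]
  have e2 : (1 + α • (Z * Zᵀ)).det = (1 + α • (Zᵀ * Z)).det := by
    rw [← Matrix.smul_mul, det_one_add_mul_comm, Matrix.mul_smul]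
  have hApsd : (α • (Zᵀ * P * Z)).PosSemidef :=
    hWW ▸ smul_transpose_mul_self_posSemidef hα.le (P * Z)
  have hSpsd : (α • (Zᵀ * Z - Zᵀ * P * Z)).PosSemidef :=
    hVV ▸ smul_transpose_mul_self_posSemidef hα.le ((1 - P) * Z)
  have hM : (1 + α • (Zᵀ * P * Z)).PosDef := Matrix.PosDef.add_posSemidef Matrix.PosDef.one hApsd
  have key : (1 + α • (Zᵀ * P * Z)).det ≤ (1 + α • (Zᵀ * Z)).det := by
    have h := det_le_det_add_posSemidef hM hSpsd
    have heq : (1 + α • (Zᵀ * P * Z)) + α • (Zᵀ * Z - Zᵀ * P * Z) = 1 + α • (Zᵀ * Z) := by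
      rw [smul_sub]
      abel
    rwa [heq] at h
  rw [e1, e2]
  have hlog := Real.log_le_log hM.det_pos key
  linarith
end

section
/- Let Z ∈ ℝ^{d×m}, P an orthogonal projection, α = d/(m ε²) for ε > 0, and R(Z) = (1/2) log det(I + α Z Z^T). Then 0 ≤ R(Z) − R(P Z) ≤ (1/2)·(d/(m ε²))·‖(I − P) Z‖_F². -/
open Matrix BigOperators

/-- The squared Frobenius norm of a matrix. -/
def frobSq {d m : ℕ} (M : Matrix (Fin d) (Fin m) ℝ) : ℝ := ∑ i, ∑ j, (M i j)^2

/-- The coding rate `R(Z) = (1/2) log det (I + (d/(m ε²)) Z Zᵀ)`. -/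
noncomputable def codingRate {d m : ℕ} (ε : ℝ) (Z : Matrix (Fin d) (Fin m) ℝ) : ℝ :=
  (1/2) * Real.log (1 + ((d : ℝ) / (m * ε^2)) • (Z * Zᵀ)).det

private lemma psd_smul {n : Type*} [Fintype n] {a : ℝ} (ha : 0 ≤ a)
    {M : Matrix n n ℝ} (hM : M.PosSemidef) : (a • M).PosSemidef := by
  constructor
  · show (a • M)ᴴ = a • M
    rw [conjTranspose_smul, hM.isHermitian.eq, star_trivial]
  · intro x
    exact (hM.smul ha).2 x

private lemma det_one_add_psd {n : Type*} [Fintype n] [DecidableEq n]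
    {M : Matrix n n ℝ} (hM : M.PosSemidef) :
    1 ≤ (1 + M).det ∧ (1 + M).det ≤ Real.exp M.trace := by
  have hH : M.IsHermitian := hM.isHermitian
  set U : Matrix n n ℝ := (hH.eigenvectorUnitary : Matrix n n ℝ) with hUdef
  have hUU : U * star U = 1 := (Matrix.mem_unitaryGroup_iff).mp hH.eigenvectorUnitary.2
  have hUU' : star U * U = 1 := (Matrix.mem_unitaryGroup_iff').mp hH.eigenvectorUnitary.2
  set μ : n → ℝ := hH.eigenvalues with hμdef
  have hspec : M = U * diagonal μ * star U := by
    have h := hH.spectral_theorem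
    rwa [RCLike.ofReal_real_eq_id, Function.id_comp] at h
  have h1 : (1 : Matrix n n ℝ) + M = U * (1 + diagonal μ) * star U := by
    rw [mul_add, mul_one, add_mul, hUU, ← hspec]
  have hdet : (1 + M).det = (1 + diagonal μ).det := by
    rw [h1, det_mul, det_mul]
    have h2 : U.det * (1 + diagonal μ).det * (star U).det
        = ((star U) * U).det * (1 + diagonal μ).det := by rw [det_mul]; ring
    rw [h2, hUU', det_one, one_mul]
  have hdd : (1 : Matrix n n ℝ) + diagonal μ = diagonal (fun i => 1 + μ i) := by
    rw [← diagonal_one, diagonal_add]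
  have htr : M.trace = ∑ i, μ i := by
    rw [hspec, trace_mul_comm, ← mul_assoc, hUU', one_mul, trace_diagonal]
  have hnn : ∀ i, 0 ≤ μ i := fun i => hM.eigenvalues_nonneg i
  constructor
  · rw [hdet, hdd, det_diagonal]
    calc (1:ℝ) = ∏ _i : n, (1:ℝ) := by rw [Finset.prod_const_one]
      _ ≤ ∏ i : n, (1 + μ i) := Finset.prod_le_prod (fun i _ => zero_le_one)
          (fun i _ => by linarith [hnn i])
  · rw [hdet, hdd, det_diagonal, htr, Real.exp_sum]
    exact Finset.prod_le_prod (fun i _ => by linarith [hnn i])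
      (fun i _ => by linarith [Real.add_one_le_exp (μ i)])

private lemma trace_psd_nonneg {n : Type*} [Fintype n] [DecidableEq n] {M : Matrix n n ℝ}
    (hM : M.PosSemidef) : 0 ≤ M.trace := by
  have h : ∀ i, 0 ≤ M i i := fun i => by
    exact hM.diag_nonneg
  exact Finset.sum_nonneg fun i _ => h i

private lemma one_sub_inv_psd {n : Type*} [Fintype n] [DecidableEq n]
    {S : Matrix n n ℝ} (hS : S.PosSemidef) :
    ((1 : Matrix n n ℝ) - (1 + S)⁻¹).PosSemidef := by
  have hY : ((1 : Matrix n n ℝ) + S).PosDef := Matrix.PosDef.add_posSemidef Matrix.PosDef.one hS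
  have hYinv : ((1 + S)⁻¹ : Matrix n n ℝ).PosDef := hY.inv
  refine Matrix.PosSemidef.of_dotProduct_mulVec_nonneg ?_ ?_
  · exact Matrix.isHermitian_one.sub hYinv.isHermitian
  · intro x
    have hx : ((1 : Matrix n n ℝ) + S) *ᵥ ((1 + S)⁻¹ *ᵥ x) = x := by
      rw [mulVec_mulVec, Matrix.mul_nonsing_inv _ hY.det_pos.ne'.isUnit, one_mulVec]
    set y : n → ℝ := (1 + S)⁻¹ *ᵥ x with hy
    have hx' : x = y + S *ᵥ y := by rw [← hx, add_mulVec, one_mulVec]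
    have h1 : star x ⬝ᵥ (((1 : Matrix n n ℝ) - (1 + S)⁻¹) *ᵥ x) = x ⬝ᵥ x - x ⬝ᵥ y := by
      rw [sub_mulVec, one_mulVec, dotProduct_sub, star_trivial]
    rw [h1, hx']
    have h2 := hS.dotProduct_mulVec_nonneg y
    rw [star_trivial] at h2
    have h3 : 0 ≤ (S *ᵥ y) ⬝ᵥ (S *ᵥ y) := Finset.sum_nonneg fun i _ => mul_self_nonneg _
    simp only [dotProduct_add, add_dotProduct]
    linarith

private lemma trace_transpose_mul_self {d m : ℕ} (A : Matrix (Fin d) (Fin m) ℝ) :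
    (Aᵀ * A).trace = frobSq A := by
  unfold frobSq
  simp only [Matrix.trace, Matrix.diag, Matrix.mul_apply, Matrix.transpose_apply, pow_two]
  exact Finset.sum_comm

private lemma det_flip {d m : ℕ} (a : ℝ) (W : Matrix (Fin d) (Fin m) ℝ) :
    ((1 : Matrix (Fin d) (Fin d) ℝ) + a • (W * Wᵀ)).det
      = ((1 : Matrix (Fin m) (Fin m) ℝ) + a • (Wᵀ * W)).det := by
  rw [← Matrix.smul_mul, det_one_add_mul_comm, Matrix.mul_smul]

/-- For `Z : ℝ^{d×m}`, an orthogonal projection `P`, and `ε > 0`: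
`0 ≤ R(Z) - R(P Z) ≤ (1/2) (d/(m ε²)) ‖(I - P) Z‖_F²`. -/
theorem coding_rate_change_bound {d m : ℕ} (hm : 0 < m)
    (Z : Matrix (Fin d) (Fin m) ℝ) (P : Matrix (Fin d) (Fin d) ℝ)
    (hP2 : P * P = P) (hPT : Pᵀ = P) (ε : ℝ) (hε : 0 < ε) :
    0 ≤ codingRate ε Z - codingRate ε (P * Z) ∧
    codingRate ε Z - codingRate ε (P * Z) ≤
      (1/2) * ((d : ℝ) / (m * ε^2)) * frobSq ((1 - P) * Z) := by
  set α : ℝ := (d : ℝ) / (m * ε^2) with hαdef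
  have hα0 : 0 ≤ α := div_nonneg (Nat.cast_nonneg d) (by positivity)
  set Q : Matrix (Fin d) (Fin d) ℝ := 1 - P with hQdef
  have hQT : Qᵀ = Q := by rw [hQdef, transpose_sub, transpose_one, hPT]
  have hQ2 : Q * Q = Q := by
    rw [hQdef]
    rw [sub_mul, one_mul, mul_sub, mul_one, hP2]
    abel
  -- transposed Gram pieces
  have hPZ : Zᵀ * (P * Z) = (P * Z)ᴴ * (P * Z) := by
    rw [conjTranspose_eq_transpose_of_trivial, transpose_mul, hPT, Matrix.mul_assoc,
      ← Matrix.mul_assoc P P Z, hP2]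
  have hQZ : Zᵀ * (Q * Z) = (Q * Z)ᴴ * (Q * Z) := by
    rw [conjTranspose_eq_transpose_of_trivial, transpose_mul, hQT, Matrix.mul_assoc,
      ← Matrix.mul_assoc Q Q Z, hQ2]
  set S : Matrix (Fin m) (Fin m) ℝ := α • (Zᵀ * (P * Z)) with hSdef
  set N : Matrix (Fin m) (Fin m) ℝ := α • (Zᵀ * (Q * Z)) with hNdef
  have hSpsd : S.PosSemidef := by
    rw [hSdef, hPZ]; exact psd_smul hα0 (posSemidef_conjTranspose_mul_self _)
  have hNpsd : N.PosSemidef := by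
    rw [hNdef, hQZ]; exact psd_smul hα0 (posSemidef_conjTranspose_mul_self _)
  have hSN : S + N = α • (Zᵀ * Z) := by
    rw [hSdef, hNdef, ← smul_add, ← Matrix.mul_add]
    have h : P * Z + Q * Z = Z := by rw [hQdef, Matrix.sub_mul, Matrix.one_mul]; abel
    rw [h]
  -- pass to m × m determinants
  have hdetZ : ((1 : Matrix (Fin d) (Fin d) ℝ) + α • (Z * Zᵀ)).det = ((1 + S) + N).det := by
    rw [det_flip, add_assoc, hSN]
  have hdetPZ : ((1 : Matrix (Fin d) (Fin d) ℝ) + α • ((P * Z) * (P * Z)ᵀ)).det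
      = ((1 : Matrix (Fin m) (Fin m) ℝ) + S).det := by
    rw [det_flip, hSdef]
    congr 2
    rw [hPZ, conjTranspose_eq_transpose_of_trivial]
  -- positive definiteness of Y = 1 + S
  have hY : ((1 : Matrix (Fin m) (Fin m) ℝ) + S).PosDef :=
    Matrix.PosDef.add_posSemidef Matrix.PosDef.one hSpsd
  have hYdet : IsUnit ((1 : Matrix (Fin m) (Fin m) ℝ) + S).det := hY.det_pos.ne'.isUnit
  have hYinv : (((1 : Matrix (Fin m) (Fin m) ℝ) + S)⁻¹).PosDef := hY.inv
  obtain ⟨G, hGsa, -, hG⟩ : ∃ G : Matrix (Fin m) (Fin m) ℝ, IsSelfAdjoint G ∧ _ ∧ G * G = N :=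
    open scoped MatrixOrder in
    CFC.exists_sqrt_of_isSelfAdjoint_of_quasispectrumRestricts hNpsd.isHermitian
      (QuasispectrumRestricts.nnreal_of_nonneg hNpsd.nonneg)
  have hGH : Gᴴ = G := hGsa.star_eq
  set M : Matrix (Fin m) (Fin m) ℝ := G * ((1 : Matrix (Fin m) (Fin m) ℝ) + S)⁻¹ * G with hMdef
  have hMpsd : M.PosSemidef := by
    have h := hYinv.posSemidef.mul_mul_conjTranspose_same G
    rwa [hGH] at h
  have hfac : (1 : Matrix (Fin m) (Fin m) ℝ) + S + N
      = ((1 : Matrix (Fin m) (Fin m) ℝ) + S) * (1 + (1 + S)⁻¹ * N) := by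
    rw [mul_add, mul_one, ← mul_assoc, Matrix.mul_nonsing_inv _ hYdet, one_mul]
  have hdet2 : (((1 : Matrix (Fin m) (Fin m) ℝ) + S) + N).det
      = ((1 : Matrix (Fin m) (Fin m) ℝ) + S).det * (1 + M).det := by
    rw [hfac, det_mul]
    congr 1
    rw [← hG, ← mul_assoc, det_one_add_mul_comm, hMdef, mul_assoc]
  have hdet1M := det_one_add_psd hMpsd
  have htrMN : M.trace ≤ N.trace := by
    have hpsd : (G * ((1 : Matrix (Fin m) (Fin m) ℝ) - (1 + S)⁻¹) * G).PosSemidef := by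
      have h1 := one_sub_inv_psd hSpsd
      have h2 := h1.mul_mul_conjTranspose_same G
      rwa [hGH] at h2
    have h2 : G * ((1 : Matrix (Fin m) (Fin m) ℝ) - (1 + S)⁻¹) * G = N - M := by
      rw [mul_sub, mul_one, sub_mul, hG, hMdef]
    rw [h2] at hpsd
    have h3 := trace_psd_nonneg hpsd
    rw [trace_sub] at h3
    linarith
  have htrN : N.trace = α * frobSq (Q * Z) := by
    rw [hNdef, trace_smul, smul_eq_mul]
    congr 1
    rw [hQZ, conjTranspose_eq_transpose_of_trivial, trace_transpose_mul_self]
  -- determinant positivity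
  have hYpos : 0 < ((1 : Matrix (Fin m) (Fin m) ℝ) + S).det := hY.det_pos
  have hMpos : (0 : ℝ) < ((1 : Matrix (Fin m) (Fin m) ℝ) + M).det :=
    lt_of_lt_of_le zero_lt_one hdet1M.1
  -- rewrite coding rates
  have hcr : codingRate ε Z - codingRate ε (P * Z) = (1/2) * Real.log ((1 + M).det) := by
    unfold codingRate
    rw [← hαdef, hdetZ, hdetPZ, hdet2, Real.log_mul hYpos.ne' hMpos.ne']
    ring
  rw [hcr]
  constructor
  · have := Real.log_nonneg hdet1M.1
    linarith
  · have hlog : Real.log ((1 + M).det) ≤ M.trace :=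
      (Real.log_le_iff_le_exp hMpos).mpr hdet1M.2
    have : Real.log ((1 + M).det) ≤ α * frobSq (Q * Z) := by
      rw [← htrN]; linarith
    calc (1/2) * Real.log ((1 + M).det) ≤ (1/2) * (α * frobSq (Q * Z)) := by linarith
      _ = (1/2) * α * frobSq (Q * Z) := by ring
end

section
/- For two d×r matrices U, V with orthonormal columns, there exists an orthogonal r×r matrix O such that ‖U O − V‖ ≤ √2 · ‖sin Θ(U, V)‖, where sin Θ(U,V) is the diagonal matrix of sines of principal angles between the column spaces, and ‖·‖ is the spectral norm. -/
open Matrix BigOperators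

/-- Eigenvalues of a Hermitian real matrix listed in descending order:
`eigDesc hA 0` is the largest. -/
noncomputable def eigDesc {n : ℕ} {A : Matrix (Fin n) (Fin n) ℝ} (hA : A.IsHermitian)
    (i : Fin n) : ℝ :=
  (hA.eigenvalues ∘ Tuple.sort hA.eigenvalues) i.rev

/-- Singular values of a real `m × n` matrix in descending order, defined as the square
roots of the descending eigenvalues of `Mᵀ M` (indexed by the columns). -/
noncomputable def singDesc {m n : ℕ} (M : Matrix (Fin m) (Fin n) ℝ) (k : Fin n) : ℝ :=
  Real.sqrt (eigDesc (Matrix.isHermitian_conjTranspose_mul_self M) k)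

/-- Singular values of a real `m × n` matrix in descending order, defined as the square
roots of the descending eigenvalues of `M Mᵀ` (indexed by the rows). -/
noncomputable def singDescRow {m n : ℕ} (M : Matrix (Fin m) (Fin n) ℝ) (k : Fin m) : ℝ :=
  Real.sqrt (eigDesc
    (by simpa [Matrix.conjTranspose_eq_transpose_of_trivial] using Matrix.isHermitian_mul_conjTranspose_self M :
      (M * Mᵀ).IsHermitian) k)

/-- The spectral (ℓ²-operator) norm of a real matrix. -/
noncomputable def specNorm {m n : Type*} [Fintype m] [Fintype n] [DecidableEq n]
    (A : Matrix m n ℝ) : ℝ :=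
  ‖LinearMap.toContinuousLinearMap (Matrix.toEuclideanLin A)‖

open scoped InnerProductSpace

lemma dot_mulVec_left {m n : ℕ} (A : Matrix (Fin m) (Fin n) ℝ) (x : Fin n → ℝ) (y : Fin m → ℝ) :
    (A *ᵥ x) ⬝ᵥ y = x ⬝ᵥ (Aᵀ *ᵥ y) := by
  rw [dotProduct_comm, dotProduct_mulVec, ← vecMul_transpose, dotProduct_comm, transpose_transpose]

lemma euclid_inner_eq {r : ℕ} (x y : EuclideanSpace ℝ (Fin r)) :
    ⟪x, y⟫_ℝ = (x : Fin r → ℝ) ⬝ᵥ (y : Fin r → ℝ) := by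
  simp [EuclideanSpace.inner_eq_star_dotProduct, dotProduct, mul_comm]

lemma euclid_norm_eq {n : ℕ} (x : EuclideanSpace ℝ (Fin n)) :
    ‖x‖ = Real.sqrt ((x : Fin n → ℝ) ⬝ᵥ (x : Fin n → ℝ)) := by
  rw [EuclideanSpace.norm_eq]
  congr 1
  simp [dotProduct, sq]

lemma inf_singDesc_le {m n : ℕ} (M : Matrix (Fin m) (Fin n) ℝ) (i : Fin n) :
    (⨅ k, singDesc M k) ≤
      Real.sqrt ((Matrix.isHermitian_conjTranspose_mul_self M).eigenvalues i) := by
  set hA := Matrix.isHermitian_conjTranspose_mul_self M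
  set σ := Tuple.sort hA.eigenvalues
  have h : singDesc M ((σ.symm i).rev) = Real.sqrt (hA.eigenvalues i) := by
    simp [singDesc, eigDesc, Fin.rev_rev, σ]
  calc (⨅ k, singDesc M k) ≤ singDesc M ((σ.symm i).rev) :=
        ciInf_le (Set.finite_range _).bddBelow _
    _ = _ := h

lemma mulVec_of_cols {n r : ℕ} (g : Fin r → (Fin n → ℝ)) (y : Fin r → ℝ) :
    (Matrix.of fun x i => g i x) *ᵥ y = ∑ i, y i • g i := by
  funext k
  simp [Matrix.mulVec, dotProduct, Finset.sum_apply, mul_comm]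

lemma cols_orthonormal_gram {r n : ℕ} (g : Fin r → EuclideanSpace ℝ (Fin n))
    (hg : Orthonormal ℝ g) :
    (Matrix.of fun x i => (g i : Fin n → ℝ) x)ᵀ * (Matrix.of fun x i => (g i : Fin n → ℝ) x)
      = 1 := by
  ext i j
  have h := orthonormal_iff_ite.mp hg i j
  rw [euclid_inner_eq] at h
  simp only [Matrix.mul_apply, Matrix.transpose_apply, Matrix.of_apply, Matrix.one_apply]
  simpa [dotProduct] using h

lemma dot_sum_sum {n r : ℕ} (f : Fin r → (Fin n → ℝ)) (a c : Fin r → ℝ)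
    (hf : ∀ i j, f i ⬝ᵥ f j = if i = j then 1 else 0) :
    (∑ i, a i • f i) ⬝ᵥ (∑ j, c j • f j) = ∑ i, a i * c i := by
  have key : ∀ (i j : Fin r), ∑ x, (a i * f i x) * (c j * f j x) = a i * c j * (f i ⬝ᵥ f j) := by
    intro i j
    rw [dotProduct, Finset.mul_sum]
    exact Finset.sum_congr rfl fun x _ => by ring
  calc (∑ i, a i • f i) ⬝ᵥ (∑ j, c j • f j)
      = ∑ x, (∑ i, a i * f i x) * (∑ j, c j * f j x) := by
        simp [dotProduct, Finset.sum_apply]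
    _ = ∑ x, ∑ i, ∑ j, (a i * f i x) * (c j * f j x) := by
        refine Finset.sum_congr rfl fun x _ => ?_
        rw [Finset.sum_mul_sum]
    _ = ∑ i, ∑ x, ∑ j, (a i * f i x) * (c j * f j x) := Finset.sum_comm
    _ = ∑ i, ∑ j, ∑ x, (a i * f i x) * (c j * f j x) :=
        Finset.sum_congr rfl fun i _ => Finset.sum_comm
    _ = ∑ i, ∑ j, a i * c j * (f i ⬝ᵥ f j) :=
        Finset.sum_congr rfl fun i _ => Finset.sum_congr rfl fun j _ => key i j
    _ = ∑ i, a i * c i := by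
        refine Finset.sum_congr rfl fun i _ => ?_
        simp [hf]

lemma dot_self_nonneg {n : ℕ} (x : Fin n → ℝ) : 0 ≤ x ⬝ᵥ x :=
  Finset.sum_nonneg fun i _ => mul_self_nonneg _

lemma specNorm_le_of_gram {m n : ℕ} (A : Matrix (Fin m) (Fin n) ℝ) (c : ℝ) (hc : 0 ≤ c)
    (h : ∀ x : Fin n → ℝ, (A *ᵥ x) ⬝ᵥ (A *ᵥ x) ≤ c^2 * (x ⬝ᵥ x)) :
    specNorm A ≤ c := by
  unfold specNorm
  refine ContinuousLinearMap.opNorm_le_bound _ hc fun x => ?_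
  have hcoe : (LinearMap.toContinuousLinearMap (Matrix.toEuclideanLin A)) x
      = (Matrix.toEuclideanLin A) x := rfl
  rw [hcoe, Matrix.toEuclideanLin_apply, euclid_norm_eq, euclid_norm_eq]
  have e2 : (((WithLp.equiv 2 (Fin m → ℝ)).symm (A *ᵥ (WithLp.equiv 2 (Fin n → ℝ)) x))
      : Fin m → ℝ) = A *ᵥ ((WithLp.equiv 2 (Fin n → ℝ)) x) := rfl
  have e3 : ((WithLp.equiv 2 (Fin n → ℝ)) x) = (x : Fin n → ℝ) := rfl
  simp only [WithLp.ofLp_toLp]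
  calc Real.sqrt ((A *ᵥ (x : Fin n → ℝ)) ⬝ᵥ (A *ᵥ (x : Fin n → ℝ)))
      ≤ Real.sqrt (c^2 * ((x : Fin n → ℝ) ⬝ᵥ (x : Fin n → ℝ))) :=
        Real.sqrt_le_sqrt (h _)
    _ = c * Real.sqrt ((x : Fin n → ℝ) ⬝ᵥ (x : Fin n → ℝ)) := by
        rw [Real.sqrt_mul (sq_nonneg c), Real.sqrt_sq hc]

/-- Orthogonal Procrustes alignment: for `U, V ∈ ℝ^{d×r}` with orthonormal columns there
is an orthogonal `O ∈ ℝ^{r×r}` with `‖U O - V‖ ≤ √2 ‖sin Θ(U,V)‖`, where the spectral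
norm of `sin Θ(U,V)` is `√(1 - σ_min(Uᵀ V)²)` (sine of the largest principal angle). -/
theorem procrustes_sin_theta_bound {d r : ℕ}
    (U V : Matrix (Fin d) (Fin r) ℝ) (hU : Uᵀ * U = 1) (hV : Vᵀ * V = 1) :
    ∃ O : Matrix (Fin r) (Fin r) ℝ, Oᵀ * O = 1 ∧
      specNorm (U * O - V) ≤
        Real.sqrt 2 * Real.sqrt (1 - (⨅ k : Fin r, singDesc (Uᵀ * V) k)^2) := by
  rcases Nat.eq_zero_or_pos r with hr | hr
  · subst hr
    refine ⟨1, by simp, ?_⟩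
    have hz : LinearMap.toContinuousLinearMap
        (Matrix.toEuclideanLin (U * (1 : Matrix (Fin 0) (Fin 0) ℝ) - V)) = 0 := by
      ext x
      have hx : x = 0 := Subsingleton.elim x 0
      simp [hx]
    unfold specNorm
    rw [hz, norm_zero]
    positivity
  · have hne : Nonempty (Fin r) := ⟨⟨0, hr⟩⟩
    set M : Matrix (Fin r) (Fin r) ℝ := Uᵀ * V with hM
    set hA := Matrix.isHermitian_conjTranspose_mul_self M with hAdef
    set μ : Fin r → ℝ := hA.eigenvalues with hμ
    set w := hA.eigenvectorBasis with hw
    set smin : ℝ := ⨅ k, singDesc M k with hsmin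
    have hpsd : (Mᵀ * M).PosSemidef := by
      simpa [Matrix.conjTranspose_eq_transpose_of_trivial] using Matrix.posSemidef_conjTranspose_mul_self M
    have hμ0 : ∀ i, 0 ≤ μ i := fun i => hpsd.eigenvalues_nonneg i
    have hsle : ∀ i, smin ≤ Real.sqrt (μ i) := fun i => inf_singDesc_le M i
    have hs0 : 0 ≤ smin := le_ciInf fun k => Real.sqrt_nonneg _
    have hmul : ∀ j, (Mᵀ * M) *ᵥ (w j : Fin r → ℝ) = μ j • (w j : Fin r → ℝ) := fun j =>
      hA.mulVec_eigenvectorBasis j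
    have hworth : ∀ i j, (w i : Fin r → ℝ) ⬝ᵥ (w j : Fin r → ℝ)
        = if i = j then 1 else 0 := by
      intro i j
      have h := orthonormal_iff_ite.mp w.orthonormal i j
      rwa [euclid_inner_eq] at h
    have hMw : ∀ i j, (M *ᵥ (w i : Fin r → ℝ)) ⬝ᵥ (M *ᵥ (w j : Fin r → ℝ))
        = if i = j then μ i else 0 := by
      intro i j
      rw [dot_mulVec_left, Matrix.mulVec_mulVec, hmul j, dotProduct_smul, hworth i j]
      by_cases hij : i = j <;> simp [hij]
    have hMw0 : ∀ i, μ i = 0 → M *ᵥ (w i : Fin r → ℝ) = 0 := by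
      intro i h0
      have h := hMw i i
      rw [if_pos rfl, h0] at h
      exact (dotProduct_self_eq_zero).mp h
    have hμ1 : ∀ i, μ i ≤ 1 := by
      intro i
      set u : Fin d → ℝ := V *ᵥ (w i : Fin r → ℝ) with hu
      set p : Fin r → ℝ := Uᵀ *ᵥ u with hp
      set q : Fin d → ℝ := U *ᵥ p with hq
      have hMwi : M *ᵥ (w i : Fin r → ℝ) = p := by
        rw [hM, ← Matrix.mulVec_mulVec, ← hu, ← hp]
      have huu : u ⬝ᵥ u = 1 := by
        rw [hu, dot_mulVec_left, Matrix.mulVec_mulVec, hV, Matrix.one_mulVec]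
        simpa using hworth i i
      have hpp : μ i = p ⬝ᵥ p := by
        have h := hMw i i
        rw [if_pos rfl, hMwi] at h
        exact h.symm
      have hpq : p ⬝ᵥ p = u ⬝ᵥ q := by
        rw [hp, dot_mulVec_left, transpose_transpose, ← hp, ← hq]
      have hqq : q ⬝ᵥ q = p ⬝ᵥ p := by
        rw [hq, dot_mulVec_left, Matrix.mulVec_mulVec, hU, Matrix.one_mulVec]
      have hcs : u ⬝ᵥ q ≤ Real.sqrt (u ⬝ᵥ u) * Real.sqrt (q ⬝ᵥ q) := by
        have h := real_inner_le_norm (show EuclideanSpace ℝ (Fin d) from WithLp.toLp 2 u)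
          (show EuclideanSpace ℝ (Fin d) from WithLp.toLp 2 q)
        rw [euclid_inner_eq, euclid_norm_eq, euclid_norm_eq] at h
        simp only [WithLp.ofLp_toLp] at h
        exact h
      rw [huu, Real.sqrt_one, one_mul, hqq] at hcs
      have hppn : 0 ≤ p ⬝ᵥ p := hpp ▸ hμ0 i
      rw [hpp]
      nlinarith [Real.mul_self_sqrt hppn, Real.sqrt_nonneg (p ⬝ᵥ p), hpq ▸ hcs]
    have hs1 : smin ≤ 1 := by
      refine le_trans (hsle ⟨0, hr⟩) ?_
      rw [show (1:ℝ) = Real.sqrt 1 from (Real.sqrt_one).symm]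
      exact Real.sqrt_le_sqrt (hμ1 _)
    -- construct the orthonormal family of normalized images
    set v : Fin r → EuclideanSpace ℝ (Fin r) :=
      fun i => WithLp.toLp 2 (((Real.sqrt (μ i))⁻¹ • (M *ᵥ (w i : Fin r → ℝ))) : Fin r → ℝ) with hv
    have horth : Orthonormal ℝ (Set.restrict {i | μ i ≠ 0} v) := by
      rw [orthonormal_iff_ite]
      rintro ⟨i, hi⟩ ⟨j, hj⟩
      have hij' : ((⟨i, hi⟩ : {i | μ i ≠ 0}) = ⟨j, hj⟩) ↔ i = j := Subtype.mk_eq_mk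
      change ⟪v i, v j⟫_ℝ = _
      rw [euclid_inner_eq]
      have hdot : (v i : Fin r → ℝ) ⬝ᵥ (v j : Fin r → ℝ) =
          (Real.sqrt (μ i))⁻¹ * ((Real.sqrt (μ j))⁻¹ * (if i = j then μ i else 0)) := by
        rw [hv]
        simp only [WithLp.ofLp_toLp, smul_dotProduct, dotProduct_smul, hMw i j, smul_eq_mul]
        ring
      rw [hdot]
      by_cases hij : i = j
      · subst hij
        have hpos : 0 < μ i := lt_of_le_of_ne (hμ0 i) (Ne.symm hi)
        have hsq : Real.sqrt (μ i) ≠ 0 := by positivity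
        rw [if_pos rfl, if_pos (hij'.mpr rfl)]
        rw [← Real.mul_self_sqrt (hμ0 i)]
        field_simp
        rw [Real.sqrt_sq (Real.sqrt_nonneg _)]
      · rw [if_neg hij, if_neg (fun h => hij (hij'.mp h))]
        ring
    obtain ⟨b, hb⟩ := horth.exists_orthonormalBasis_extension_of_card_eq
      (by simp : Module.finrank ℝ (EuclideanSpace ℝ (Fin r)) = Fintype.card (Fin r))
    have hborth : ∀ i j, (b i : Fin r → ℝ) ⬝ᵥ (b j : Fin r → ℝ)
        = if i = j then 1 else 0 := by
      intro i j
      have h := orthonormal_iff_ite.mp b.orthonormal i j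
      rwa [euclid_inner_eq] at h
    have hMwb : ∀ i, M *ᵥ (w i : Fin r → ℝ) = Real.sqrt (μ i) • (b i : Fin r → ℝ) := by
      intro i
      by_cases h0 : μ i = 0
      · rw [hMw0 i h0, h0]
        simp
      · have hbv : b i = v i := hb i h0
        have hsq : Real.sqrt (μ i) ≠ 0 := by
          have hpos : 0 < μ i := lt_of_le_of_ne (hμ0 i) (Ne.symm h0)
          positivity
        rw [hbv]
        simp only [hv, WithLp.ofLp_toLp]
        rw [smul_inv_smul₀ hsq]
    -- the matrices
    set B : Matrix (Fin r) (Fin r) ℝ := Matrix.of fun x i => (b i : Fin r → ℝ) x with hB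
    set Wm : Matrix (Fin r) (Fin r) ℝ := Matrix.of fun x i => (w i : Fin r → ℝ) x with hWm
    have hBtB : Bᵀ * B = 1 := cols_orthonormal_gram _ b.orthonormal
    have hWtW : Wmᵀ * Wm = 1 := cols_orthonormal_gram _ w.orthonormal
    have hWWt : Wm * Wmᵀ = 1 := mul_eq_one_comm.mp hWtW
    set O : Matrix (Fin r) (Fin r) ℝ := B * Wmᵀ with hO
    have hOtO : Oᵀ * O = 1 := by
      rw [hO, transpose_mul, transpose_transpose, Matrix.mul_assoc,
        ← Matrix.mul_assoc Bᵀ, hBtB, Matrix.one_mul, hWWt]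
    -- the key positivity inequality
    have hkey : ∀ x : Fin r → ℝ, smin * (x ⬝ᵥ x) ≤ (O *ᵥ x) ⬝ᵥ (M *ᵥ x) := by
      intro x
      set y : Fin r → ℝ := Wmᵀ *ᵥ x with hy
      have hxy : Wm *ᵥ y = x := by
        rw [hy, Matrix.mulVec_mulVec, hWWt, Matrix.one_mulVec]
      have hOx : O *ᵥ x = ∑ i, y i • (b i : Fin r → ℝ) := by
        rw [hO, ← Matrix.mulVec_mulVec, ← hy, hB, mulVec_of_cols]
      have hMx : M *ᵥ x = ∑ i, (y i * Real.sqrt (μ i)) • (b i : Fin r → ℝ) := by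
        conv_lhs => rw [← hxy, hWm, mulVec_of_cols]
        rw [show (M *ᵥ (∑ i, y i • (w i : Fin r → ℝ)))
            = M.mulVecLin (∑ i, y i • (w i : Fin r → ℝ)) from rfl, map_sum]
        refine Finset.sum_congr rfl fun i _ => ?_
        rw [LinearMap.map_smul, Matrix.mulVecLin_apply, hMwb i, smul_smul]
      have hdot : (O *ᵥ x) ⬝ᵥ (M *ᵥ x) = ∑ i, y i * (y i * Real.sqrt (μ i)) := by
        rw [hOx, hMx, dot_sum_sum _ _ _ hborth]
      have hyy : y ⬝ᵥ y = x ⬝ᵥ x := by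
        nth_rewrite 1 [hy]
        rw [dot_mulVec_left, transpose_transpose, hxy]
      rw [hdot, ← hyy]
      have : smin * (y ⬝ᵥ y) = ∑ i, smin * (y i * y i) := by
        rw [dotProduct, Finset.mul_sum]
      rw [this]
      refine Finset.sum_le_sum fun i _ => ?_
      have h1 : smin * (y i * y i) ≤ Real.sqrt (μ i) * (y i * y i) :=
        mul_le_mul_of_nonneg_right (hsle i) (mul_self_nonneg _)
      nlinarith [h1]
    -- Gram matrix identity
    have hGeq : (U * O - V)ᵀ * (U * O - V) = 1 - Oᵀ * M - Mᵀ * O + 1 := by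
      rw [transpose_sub, transpose_mul, Matrix.sub_mul, Matrix.mul_sub, Matrix.mul_sub]
      have e1 : Oᵀ * Uᵀ * (U * O) = 1 := by
        rw [Matrix.mul_assoc, ← Matrix.mul_assoc Uᵀ, hU, Matrix.one_mul, hOtO]
      have e2 : Oᵀ * Uᵀ * V = Oᵀ * M := by rw [Matrix.mul_assoc, ← hM]
      have e3 : Vᵀ * (U * O) = Mᵀ * O := by
        rw [← Matrix.mul_assoc, hM, transpose_mul, transpose_transpose]
      rw [e1, e2, e3, hV]
      abel
    -- final bound
    refine ⟨O, hOtO, ?_⟩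
    have hnn : (0:ℝ) ≤ Real.sqrt 2 * Real.sqrt (1 - smin^2) := by positivity
    have hs2 : (0:ℝ) ≤ 1 - smin^2 := by nlinarith [hs0, hs1]
    have hc2 : (Real.sqrt 2 * Real.sqrt (1 - smin^2))^2 = 2 * (1 - smin^2) := by
      rw [mul_pow, Real.sq_sqrt (by norm_num : (0:ℝ) ≤ 2), Real.sq_sqrt hs2]
    refine specNorm_le_of_gram _ _ hnn fun x => ?_
    have hzz : ((U * O - V) *ᵥ x) ⬝ᵥ ((U * O - V) *ᵥ x)
        = 2 * (x ⬝ᵥ x) - 2 * ((O *ᵥ x) ⬝ᵥ (M *ᵥ x)) := by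
      rw [dot_mulVec_left, Matrix.mulVec_mulVec, hGeq]
      rw [Matrix.add_mulVec, Matrix.sub_mulVec, Matrix.sub_mulVec, Matrix.one_mulVec]
      rw [dotProduct_add, dotProduct_sub, dotProduct_sub]
      have e4 : x ⬝ᵥ ((Oᵀ * M) *ᵥ x) = (O *ᵥ x) ⬝ᵥ (M *ᵥ x) := by
        rw [← Matrix.mulVec_mulVec, ← dot_mulVec_left]
      have e5 : x ⬝ᵥ ((Mᵀ * O) *ᵥ x) = (O *ᵥ x) ⬝ᵥ (M *ᵥ x) := by
        rw [← Matrix.mulVec_mulVec, ← dot_mulVec_left, dotProduct_comm]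
      rw [e4, e5]
      ring
    rw [hzz, hc2]
    nlinarith [hkey x, hs0, hs1, dot_self_nonneg x,
      mul_nonneg (mul_nonneg hs0 (by linarith : (0:ℝ) ≤ 1 - smin)) (dot_self_nonneg x)]
end
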